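/- If X is a Urysohn space, then |X| ≤ 2^{κ(X)·aL(X)}. -/

import Mathlib

open Set Topology Cardinal

universe u

variable {X : Type u}

/-- The θ-closure of a set. -/
def thetaCl [TopologicalSpace X] (A : Set X) : Set X :=
  {x | ∀ U : Set X, IsOpen U → x ∈ U → (closure U ∩ A).Nonempty}

/-- The θ-closed hull of a set. -/
def thetaHull [TopologicalSpace X] (A : Set X) : Set X :=
  ⋂₀ {C : Set X | thetaCl C = C ∧ A ⊆ C}

/-- A nonempty set is finitely non-Urysohn if every finite choice of closed
neighborhoods (closures of open neighborhoods) of finitely many of its points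
has nonempty intersection. -/
def FinNonUrysohn [TopologicalSpace X] (A : Set X) : Prop :=
  A.Nonempty ∧ ∀ F : Set X, F ⊆ A → F.Nonempty → F.Finite →
    ∀ U : X → Set X, (∀ x ∈ F, IsOpen (U x) ∧ x ∈ U x) →
      (⋂ x ∈ F, closure (U x)).Nonempty

/-- The non-Urysohn number `nu(X)`. -/
noncomputable def nuNumber (X : Type u) [TopologicalSpace X] : Cardinal.{u} :=
  1 + ⨆ A : {A : Set X // FinNonUrysohn A}, #↥A.1

/-- The Urysohn number `U(X)`. -/
noncomputable def UrysohnNumber (X : Type u) [TopologicalSpace X] : Cardinal.{u} :=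
  sInf {κ : Cardinal.{u} | ∀ A : Set X, κ ≤ #↥A → ∃ U : X → Set X,
    (∀ a ∈ A, IsOpen (U a) ∧ a ∈ U a) ∧ (⋂ a ∈ A, closure (U a)) = ∅}

/-- The cardinal function `κ(X)`: the smallest infinite cardinal such that each
point has a family of at most that many closed neighborhoods cofinal (under
reverse inclusion) in the closures of its open neighborhoods. -/
noncomputable def kappaInv (X : Type u) [TopologicalSpace X] : Cardinal.{u} :=
  sInf {κ : Cardinal.{u} | ℵ₀ ≤ κ ∧ ∀ x : X, ∃ V : Set (Set X), #↥V ≤ κ ∧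
    (∀ W ∈ V, IsClosed W ∧ W ∈ nhds x) ∧
    ∀ U : Set X, IsOpen U → x ∈ U → ∃ W ∈ V, W ⊆ closure U}

/-- The character `χ(X)`. -/
noncomputable def chiChar (X : Type u) [TopologicalSpace X] : Cardinal.{u} :=
  sInf {κ : Cardinal.{u} | ℵ₀ ≤ κ ∧ ∀ x : X, ∃ B : Set (Set X), #↥B ≤ κ ∧
    (∀ U ∈ B, U ∈ nhds x) ∧ ∀ S ∈ nhds x, ∃ U ∈ B, U ⊆ S}

/-- The θ-density `d_θ(X)`. -/
noncomputable def dTheta (X : Type u) [TopologicalSpace X] : Cardinal.{u} :=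
  sInf {c : Cardinal.{u} | ∃ A : Set X, thetaCl A = Set.univ ∧ #↥A = c}

/-- The cardinal function `sL_θ(X)`. -/
noncomputable def sLtheta (X : Type u) [TopologicalSpace X] : Cardinal.{u} :=
  sInf {τ : Cardinal.{u} | ℵ₀ ≤ τ ∧ ∀ A : Set X, ∀ 𝒰 : Set (Set X),
    (∀ U ∈ 𝒰, IsOpen U) → thetaCl A ⊆ ⋃₀ 𝒰 →
    ∃ 𝒱 ⊆ 𝒰, #↥𝒱 ≤ τ ∧ A ⊆ closure (⋃₀ 𝒱)}

/-- The cardinal function `wL_c(X)`. -/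
noncomputable def wLc (X : Type u) [TopologicalSpace X] : Cardinal.{u} :=
  sInf {τ : Cardinal.{u} | ℵ₀ ≤ τ ∧ ∀ A : Set X, IsClosed A → ∀ 𝒰 : Set (Set X),
    (∀ U ∈ 𝒰, IsOpen U) → A ⊆ ⋃₀ 𝒰 →
    ∃ 𝒱 ⊆ 𝒰, #↥𝒱 ≤ τ ∧ A ⊆ closure (⋃₀ 𝒱)}

/-- The almost Lindelöf degree `aL(X)`. -/
noncomputable def aLdeg (X : Type u) [TopologicalSpace X] : Cardinal.{u} :=
  sInf {τ : Cardinal.{u} | ℵ₀ ≤ τ ∧ ∀ 𝒰 : Set (Set X),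
    (∀ U ∈ 𝒰, IsOpen U) → ⋃₀ 𝒰 = Set.univ →
    ∃ 𝒱 ⊆ 𝒰, #↥𝒱 ≤ τ ∧ (⋃ V ∈ 𝒱, closure V) = Set.univ}

/-- `X` is a Urysohn space: distinct points have open neighborhoods with
disjoint closures. -/
def UrysohnSpace (X : Type u) [TopologicalSpace X] : Prop :=
  ∀ x y : X, x ≠ y → ∃ U V : Set X, IsOpen U ∧ IsOpen V ∧ x ∈ U ∧ y ∈ V ∧
    closure U ∩ closure V = ∅

/-- For a set `S`, the intersection over all choices of closed neighborhoods of
the points of `S` of the θ-closures of the intersections of the choices. -/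
def capSet [TopologicalSpace X] (S : Set X) : Set X :=
  {y | ∀ U : X → Set X, (∀ a ∈ S, IsOpen (U a) ∧ a ∈ U a) →
    y ∈ thetaCl (⋂ a ∈ S, closure (U a))}

/-- For a set `M`, the intersection over all nonempty finite `F ⊆ M` and all
choices of open neighborhoods of points of `F` of
`cl_θ(⋂_{x∈F} closure (U x))`. -/
def fnuCap [TopologicalSpace X] (M : Set X) : Set X :=
  {y | ∀ F : Set X, F ⊆ M → F.Nonempty → F.Finite → ∀ U : X → Set X,
    (∀ x ∈ F, IsOpen (U x) ∧ x ∈ U x) →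
    y ∈ thetaCl (⋂ x ∈ F, closure (U x))}


section AuxStatement12

/-- Transfinite recursion used for the closing-off argument. -/
noncomputable def ordRecAux12 {α : Type u} (step : Set α → Set α) : Ordinal.{u} → Set α :=
  Ordinal.lt_wf.fix fun β ih => step (⋃ γ : Set.Iio β, ih γ.1 γ.2)

lemma ordRecAux12_eq {α : Type u} (step : Set α → Set α) (β : Ordinal.{u}) :
    ordRecAux12 step β = step (⋃ γ : Set.Iio β, ordRecAux12 step γ.1) :=
  Ordinal.lt_wf.fix_eq _ β

lemma mk_iUnion_ordinal_le12 {α : Type u} {o : Ordinal.{u}} {f : Ordinal.{u} → Set α}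
    {c : Cardinal.{u}} (hinf : ℵ₀ ≤ c) (ho : o.card ≤ c) (hf : ∀ β, β < o → #(f β) ≤ c) :
    #(⋃ β : Set.Iio o, f β.1) ≤ c := by
  rw [← Cardinal.lift_le.{u+1}]
  refine (Cardinal.mk_iUnion_le_lift (fun β : Set.Iio o => f β.1)).trans ?_
  have h1 : Cardinal.lift.{u} #(Set.Iio o) ≤ Cardinal.lift.{u+1} c := by
    rw [Ordinal.mk_Iio_ordinal, Cardinal.lift_lift]
    exact Cardinal.lift_le.2 ho
  have h2 : ⨆ β : Set.Iio o, Cardinal.lift.{u+1} #(f β.1) ≤ Cardinal.lift.{u+1} c :=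
    ciSup_le' fun β => Cardinal.lift_le.2 (hf β.1 β.2)
  calc Cardinal.lift.{u} #(Set.Iio o) * ⨆ β : Set.Iio o, Cardinal.lift.{u+1} #(f β.1)
      ≤ Cardinal.lift.{u+1} c * Cardinal.lift.{u+1} c := mul_le_mul' h1 h2
    _ = Cardinal.lift.{u+1} (c * c) := by rw [Cardinal.lift_mul]
    _ = Cardinal.lift.{u+1} c := by rw [Cardinal.mul_eq_self hinf]

/-- Cardinality bound on the θ-closure of a small set in a Urysohn space with
κ-families. -/
lemma mk_thetaCl_le12 [TopologicalSpace X] (hX : UrysohnSpace X) (κ : Cardinal.{u})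
    (hκ : ℵ₀ ≤ κ) (V : X → Set (Set X)) (hVc : ∀ x, #(V x) ≤ κ)
    (hVn : ∀ x, ∀ W ∈ V x, IsClosed W ∧ W ∈ nhds x)
    (hVf : ∀ x, ∀ U : Set X, IsOpen U → x ∈ U → ∃ W ∈ V x, W ⊆ closure U)
    (B : Set X) (hB : #B ≤ κ) : #(thetaCl B) ≤ 2 ^ κ := by
  classical
  have hmemθ : ∀ q : thetaCl B, ∀ U : Set X, IsOpen U → (q : X) ∈ U →
      (closure U ∩ B).Nonempty := fun q => q.2
  set f : thetaCl B → Set (Set X) := fun q => (fun W => W ∩ B) '' (V q.1) with hf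
  have hfinj : Function.Injective f := by
    intro q q' h
    by_contra hne
    have hqq' : (q : X) ≠ (q' : X) := fun e => hne (Subtype.ext e)
    obtain ⟨U, U', hU, hU', hqU, hq'U', hsep⟩ := hX q q' hqq'
    obtain ⟨W, hWV, hWcl⟩ := hVf q U hU hqU
    obtain ⟨W', hW'V, hW'cl⟩ := hVf q' U' hU' hq'U'
    have hmem : W ∩ B ∈ f q' := by rw [← h]; exact ⟨W, hWV, rfl⟩
    obtain ⟨W₂, hW₂V, hW₂eq⟩ := hmem
    have hq'W₂ : (q' : X) ∈ interior W₂ :=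
      mem_interior_iff_mem_nhds.2 (hVn q' W₂ hW₂V).2
    have hq'W' : (q' : X) ∈ interior W' :=
      mem_interior_iff_mem_nhds.2 (hVn q' W' hW'V).2
    obtain ⟨b, hbcl, hbB⟩ := hmemθ q' (interior W₂ ∩ interior W')
      (isOpen_interior.inter isOpen_interior) ⟨hq'W₂, hq'W'⟩
    have hbW₂ : b ∈ W₂ :=
      closure_minimal (inter_subset_left.trans interior_subset) (hVn q' W₂ hW₂V).1 hbcl
    have hbW' : b ∈ W' :=
      closure_minimal (inter_subset_right.trans interior_subset) (hVn q' W' hW'V).1 hbcl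
    have hbWB : b ∈ W ∩ B := by rw [← hW₂eq]; exact ⟨hbW₂, hbB⟩
    have : b ∈ closure U ∩ closure U' := ⟨hWcl hbWB.1, hW'cl hbW'⟩
    rw [hsep] at this
    exact this
  have hg : Function.Injective (fun q : thetaCl B =>
      (⟨f q, fun S hS => by obtain ⟨W, _, rfl⟩ := hS; exact Set.inter_subset_right,
        Cardinal.mk_image_le.trans (hVc q.1)⟩ :
        {t : Set (Set X) // (∀ S ∈ t, S ⊆ B) ∧ #t ≤ κ})) := by
    intro q q' h
    exact hfinj (congrArg Subtype.val h)
  have h1 : #(thetaCl B) ≤ #{t : Set (Set X) // (∀ S ∈ t, S ⊆ B) ∧ #t ≤ κ} :=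
    Cardinal.mk_le_of_injective hg
  have h2 : #{t : Set (Set X) // (∀ S ∈ t, S ⊆ B) ∧ #t ≤ κ}
      ≤ #{t : Set (Set X) // t ⊆ {S : Set X | S ⊆ B} ∧ #t ≤ κ} := by
    apply Cardinal.mk_le_of_injective (f := fun t => ⟨t.1, fun S hS => t.2.1 S hS, t.2.2⟩)
    intro t t' h
    exact Subtype.ext (congrArg Subtype.val h)
  have h3 : #{t : Set (Set X) // t ⊆ {S : Set X | S ⊆ B} ∧ #t ≤ κ}
      ≤ max #({S : Set X | S ⊆ B}) ℵ₀ ^ κ := Cardinal.mk_bounded_subset_le _ κ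
  have hPB : #({S : Set X | S ⊆ B}) ≤ 2 ^ κ := by
    have : #({S : Set X | S ⊆ B}) ≤ #(Set B) := by
      apply Cardinal.mk_le_of_injective (f := fun S => (Subtype.val ⁻¹' S.1 : Set B))
      intro S S' h
      apply Subtype.ext
      have h1 := congrArg (fun t => Subtype.val '' t) h
      simpa [Subtype.image_preimage_coe, Set.inter_eq_self_of_subset_right S.2,
        Set.inter_eq_self_of_subset_right S'.2] using h1
    refine this.trans ?_
    rw [Cardinal.mk_set]
    exact Cardinal.power_le_power_left (by norm_num) hB
  refine (h1.trans (h2.trans h3)).trans ?_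
  calc max #({S : Set X | S ⊆ B}) ℵ₀ ^ κ ≤ (2 ^ κ) ^ κ :=
        Cardinal.power_le_power_right (max_le hPB (hκ.trans (Cardinal.cantor κ).le))
    _ = 2 ^ (κ * κ) := by rw [← Cardinal.power_mul]
    _ = 2 ^ κ := by rw [Cardinal.mul_eq_self hκ]

end AuxStatement12

set_option maxHeartbeats 1000000 in
theorem statement12 (X : Type u) [TopologicalSpace X] (hX : UrysohnSpace X) :
    #X ≤ 2 ^ (kappaInv X * aLdeg X) := by
  classical
  rcases isEmpty_or_nonempty X with hE | hNE
  · simp [Cardinal.mk_eq_zero]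
  set κ : Cardinal.{u} := kappaInv X * aLdeg X with hκdef
  -- membership of the defining infima
  have hKmem : kappaInv X ∈ {κ' : Cardinal.{u} | ℵ₀ ≤ κ' ∧ ∀ x : X,
      ∃ V : Set (Set X), #↥V ≤ κ' ∧ (∀ W ∈ V, IsClosed W ∧ W ∈ nhds x) ∧
      ∀ U : Set X, IsOpen U → x ∈ U → ∃ W ∈ V, W ⊆ closure U} := by
    apply csInf_mem
    refine ⟨max ℵ₀ (2 ^ #X), le_max_left _ _, fun x => ⟨{W | IsClosed W ∧ W ∈ nhds x},
      ?_, fun W hW => hW, fun U hU hx => ⟨closure U, ⟨isClosed_closure,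
        Filter.mem_of_superset (hU.mem_nhds hx) subset_closure⟩, subset_rfl⟩⟩⟩
    refine le_max_of_le_right ?_
    exact (Cardinal.mk_set_le _).trans_eq Cardinal.mk_set
  have hAmem : aLdeg X ∈ {τ : Cardinal.{u} | ℵ₀ ≤ τ ∧ ∀ 𝒰 : Set (Set X),
      (∀ U ∈ 𝒰, IsOpen U) → ⋃₀ 𝒰 = Set.univ →
      ∃ 𝒱 ⊆ 𝒰, #↥𝒱 ≤ τ ∧ (⋃ V ∈ 𝒱, closure V) = Set.univ} := by
    apply csInf_mem
    refine ⟨max ℵ₀ (2 ^ #X), le_max_left _ _, fun 𝒰 hop hcov =>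
      ⟨𝒰, subset_rfl, ?_, ?_⟩⟩
    · exact le_max_of_le_right ((Cardinal.mk_set_le _).trans_eq Cardinal.mk_set)
    · apply eq_univ_of_forall
      intro y
      obtain ⟨U, hU𝒰, hyU⟩ := hcov.symm ▸ mem_univ y
      exact mem_biUnion hU𝒰 (subset_closure hyU)
  obtain ⟨hKinf, hKprop⟩ := hKmem
  obtain ⟨hAinf, hAprop⟩ := hAmem
  have hone : (1 : Cardinal.{u}) ≤ aLdeg X := le_trans Cardinal.one_le_aleph0 hAinf
  have honeK : (1 : Cardinal.{u}) ≤ kappaInv X := le_trans Cardinal.one_le_aleph0 hKinf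
  have hKle : kappaInv X ≤ κ := le_mul_of_one_le_right zero_le hone
  have hAle : aLdeg X ≤ κ := le_mul_of_one_le_left zero_le honeK
  have hκinf : ℵ₀ ≤ κ := hKinf.trans hKle
  choose V hVc hVn hVf using hKprop
  have hVc' : ∀ x, #(V x) ≤ κ := fun x => (hVc x).trans hKle
  have hAL : ∀ 𝒰 : Set (Set X), (∀ U ∈ 𝒰, IsOpen U) → ⋃₀ 𝒰 = Set.univ →
      ∃ 𝒱 ⊆ 𝒰, #↥𝒱 ≤ κ ∧ (⋃ V ∈ 𝒱, closure V) = Set.univ := by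
    intro 𝒰 h1 h2
    obtain ⟨𝒱, h𝒱1, h𝒱2, h𝒱3⟩ := hAprop 𝒰 h1 h2
    exact ⟨𝒱, h𝒱1, h𝒱2.trans hAle, h𝒱3⟩
  -- basic arithmetic
  have h2κinf : ℵ₀ ≤ 2 ^ κ := hκinf.trans (Cardinal.cantor κ).le
  have hmul : (2 : Cardinal.{u}) ^ κ * 2 ^ κ = 2 ^ κ := Cardinal.mul_eq_self h2κinf
  have hpow : ((2 : Cardinal.{u}) ^ κ) ^ κ = 2 ^ κ := by
    rw [← Cardinal.power_mul, Cardinal.mul_eq_self hκinf]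
  -- witness function
  obtain ⟨wit, hwit⟩ : ∃ wit : Set (Set X) → X, ∀ 𝒮 : Set (Set X),
      ⋃₀ 𝒮 ≠ Set.univ → wit 𝒮 ∉ ⋃₀ 𝒮 := by
    refine ⟨fun 𝒮 => if h : ∃ z, z ∉ ⋃₀ 𝒮 then h.choose else Classical.arbitrary X, ?_⟩
    intro 𝒮 h
    have h' : ∃ z, z ∉ ⋃₀ 𝒮 := by
      by_contra hc
      push_neg at hc
      exact h (eq_univ_of_forall hc)
    simp only [dif_pos h']
    exact h'.choose_spec
  -- the closing-off step function
  obtain ⟨step, hstep1, hstep2, hstep3⟩ : ∃ step : Set X → Set X,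
      (∀ S : Set X, ∀ B : Set X, B ⊆ S → #B ≤ κ → thetaCl B ⊆ step S) ∧
      (∀ S : Set X, ∀ 𝒮 : Set (Set X), 𝒮 ⊆ (⋃ x ∈ S, V x) → #𝒮 ≤ κ →
        wit 𝒮 ∈ step S) ∧
      (∀ S : Set X, #S ≤ 2 ^ κ → #(step S) ≤ 2 ^ κ) := by
    refine ⟨fun S => S ∪ ((⋃ B ∈ {B : Set X | B ⊆ S ∧ #B ≤ κ}, thetaCl B) ∪
      (wit '' {𝒮 : Set (Set X) | 𝒮 ⊆ (⋃ x ∈ S, V x) ∧ #𝒮 ≤ κ})), ?_, ?_, ?_⟩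
    · intro S B hBS hBκ z hz
      exact Or.inr (Or.inl (mem_biUnion (⟨hBS, hBκ⟩ : B ∈ {B : Set X | B ⊆ S ∧ #B ≤ κ}) hz))
    · intro S 𝒮 h𝒮 h𝒮κ
      exact Or.inr (Or.inr ⟨𝒮, ⟨h𝒮, h𝒮κ⟩, rfl⟩)
    · intro S hS
      have hBset : #({B : Set X | B ⊆ S ∧ #B ≤ κ}) ≤ 2 ^ κ := by
        refine (Cardinal.mk_bounded_subset_le S κ).trans ?_
        exact (Cardinal.power_le_power_right (max_le hS h2κinf)).trans hpow.le
      have hT1 : #(⋃ B ∈ {B : Set X | B ⊆ S ∧ #B ≤ κ}, thetaCl B) ≤ 2 ^ κ := by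
        refine (Cardinal.mk_biUnion_le _ _).trans ?_
        refine (mul_le_mul' hBset (ciSup_le' fun B => ?_)).trans hmul.le
        exact mk_thetaCl_le12 hX κ hκinf V hVc' hVn hVf B.1 B.2.2
      have hT : #(⋃ x ∈ S, V x) ≤ 2 ^ κ := by
        refine (Cardinal.mk_biUnion_le _ _).trans ?_
        exact (mul_le_mul' hS (ciSup_le' (fun x : ↥S => (hVc' x.1).trans
          (Cardinal.cantor κ).le))).trans hmul.le
      have hT2 : #(wit '' {𝒮 : Set (Set X) | 𝒮 ⊆ (⋃ x ∈ S, V x) ∧ #𝒮 ≤ κ}) ≤ 2 ^ κ := by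
        refine Cardinal.mk_image_le.trans ?_
        refine (Cardinal.mk_bounded_subset_le _ κ).trans ?_
        exact (Cardinal.power_le_power_right (max_le hT h2κinf)).trans hpow.le
      refine ((Cardinal.mk_union_le _ _).trans (add_le_add hS
        ((Cardinal.mk_union_le _ _).trans (add_le_add hT1 hT2)))).trans ?_
      rw [Cardinal.add_eq_self h2κinf, Cardinal.add_eq_self h2κinf]
  -- the transfinite sequence
  obtain ⟨Ach, hAch⟩ : ∃ Ach : Ordinal.{u} → Set X,
      ∀ α, Ach α = step (⋃ β : Set.Iio α, Ach β.1) :=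
    ⟨ordRecAux12 step, ordRecAux12_eq step⟩
  set O : Ordinal.{u} := (Order.succ κ).ord with hO
  have hOℵ : ℵ₀ ≤ Order.succ κ := hκinf.trans (Order.le_succ κ)
  have hcof : O.cof = Order.succ κ := (Cardinal.isRegular_succ hκinf).cof_eq
  have hOlim : Order.IsSuccLimit O := Cardinal.isSuccLimit_ord hOℵ
  -- cardinality of the levels
  have hcard : ∀ α, α < O → #(Ach α) ≤ 2 ^ κ := by
    intro α
    induction α using Ordinal.induction with
    | h α ih =>
      intro hα
      rw [hAch α]
      apply hstep3
      refine mk_iUnion_ordinal_le12 h2κinf ?_ (fun β hβ => ih β hβ (hβ.trans hα))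
      refine (Ordinal.card_le_card hα.le).trans ?_
      rw [Cardinal.card_ord]
      exact Order.succ_le_of_lt (Cardinal.cantor κ)
  set 𝔄 : Set X := ⋃ α : Set.Iio O, Ach α.1 with h𝔄
  have h𝔄card : #𝔄 ≤ 2 ^ κ := by
    refine mk_iUnion_ordinal_le12 h2κinf ?_ hcard
    rw [Cardinal.card_ord]
    exact Order.succ_le_of_lt (Cardinal.cantor κ)
  -- absorption property P2
  have hP2 : ∀ B : Set X, B ⊆ 𝔄 → #B ≤ κ → thetaCl B ⊆ 𝔄 := by
    intro B hB𝔄 hBκ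
    have hordB : ∀ b : B, ∃ α : Set.Iio O, (b : X) ∈ Ach α.1 := fun b =>
      mem_iUnion.1 (hB𝔄 b.2)
    choose rB hrB using hordB
    have hγB : (⨆ b : B, (rB b).1) < O := by
      refine Ordinal.iSup_lt_ord ?_ (fun b => (rB b).2)
      rw [hcof]
      exact hBκ.trans_lt (Order.lt_succ κ)
    have hsucc : Order.succ (⨆ b : B, (rB b).1) < O := hOlim.succ_lt hγB
    have hBsub : B ⊆ ⋃ β : Set.Iio (Order.succ (⨆ b : B, (rB b).1)), Ach β.1 := by
      intro b hb
      refine mem_iUnion.2 ⟨⟨(rB ⟨b, hb⟩).1, ?_⟩, hrB ⟨b, hb⟩⟩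
      exact (le_ciSup (Ordinal.bddAbove_range _) (⟨b, hb⟩ : B)).trans_lt (Order.lt_succ _)
    intro z hz
    have h1 : z ∈ step (⋃ β : Set.Iio (Order.succ (⨆ b : B, (rB b).1)), Ach β.1) :=
      hstep1 _ B hBsub hBκ hz
    rw [← hAch] at h1
    exact mem_iUnion.2 ⟨⟨_, hsucc⟩, h1⟩
  -- 𝔄 is θ-closed
  have hthc : thetaCl 𝔄 ⊆ 𝔄 := by
    intro z hz
    have hz' : ∀ U : Set X, IsOpen U → z ∈ U → (closure U ∩ 𝔄).Nonempty := hz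
    have hWz : ∀ Wm : V z, ∃ b, b ∈ Wm.1 ∧ b ∈ 𝔄 := by
      rintro ⟨Wm, hWm⟩
      have h1 : z ∈ interior Wm := mem_interior_iff_mem_nhds.2 (hVn z Wm hWm).2
      obtain ⟨b, hb1, hb2⟩ := hz' (interior Wm) isOpen_interior h1
      exact ⟨b, closure_minimal interior_subset (hVn z Wm hWm).1 hb1, hb2⟩
    choose b hb1 hb2 using hWz
    have hq : z ∈ thetaCl (Set.range b) := by
      intro U hU hzU
      obtain ⟨Wm, hWmV, hWmcl⟩ := hVf z U hU hzU
      exact ⟨b ⟨Wm, hWmV⟩, hWmcl (hb1 ⟨Wm, hWmV⟩), mem_range_self _⟩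
    exact hP2 (Set.range b) (range_subset_iff.2 hb2)
      (Cardinal.mk_range_le.trans (hVc' z)) hq
  -- main claim : X = 𝔄
  have htot : ∀ z : X, z ∈ 𝔄 := by
    by_contra hc
    push_neg at hc
    obtain ⟨q, hq⟩ := hc
    -- separate each point of 𝔄 from q
    have hWex : ∀ x : X, ∃ Wx : Set X, x ∈ 𝔄 → Wx ∈ V x ∧ q ∉ Wx := by
      intro x
      by_cases hx : x ∈ 𝔄
      · have hxq : x ≠ q := fun e => hq (e ▸ hx)
        obtain ⟨U, U', hU, hU', hxU, hqU', hsep⟩ := hX x q hxq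
        obtain ⟨W, hWV, hWcl⟩ := hVf x U hU hxU
        refine ⟨W, fun _ => ⟨hWV, fun hqW => ?_⟩⟩
        have : q ∈ closure U ∩ closure U' := ⟨hWcl hqW, subset_closure hqU'⟩
        rw [hsep] at this
        exact this
      · exact ⟨∅, fun h => absurd h hx⟩
    choose W hW using hWex
    -- the open cover
    set 𝒰 : Set (Set X) := ((fun x => interior (W x)) '' 𝔄) ∪
      {G : Set X | IsOpen G ∧ closure G ∩ 𝔄 = ∅} with h𝒰
    have h𝒰open : ∀ u ∈ 𝒰, IsOpen u := by
      rintro u (⟨x, hx, rfl⟩ | hu)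
      · exact isOpen_interior
      · exact hu.1
    have h𝒰cov : ⋃₀ 𝒰 = Set.univ := by
      apply eq_univ_of_forall
      intro y
      by_cases hy : y ∈ 𝔄
      · exact ⟨interior (W y), Or.inl ⟨y, hy, rfl⟩,
          mem_interior_iff_mem_nhds.2 (hVn y (W y) (hW y hy).1).2⟩
      · have hyθ : y ∉ thetaCl 𝔄 := fun h => hy (hthc h)
        simp only [thetaCl, mem_setOf_eq, not_forall] at hyθ
        obtain ⟨G, hG, hyG, hGne⟩ := hyθ
        exact ⟨G, Or.inr ⟨hG, not_nonempty_iff_eq_empty.1 hGne⟩, hyG⟩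
    obtain ⟨𝒱, h𝒱sub, h𝒱card, h𝒱cov⟩ := hAL 𝒰 h𝒰open h𝒰cov
    -- select the closed neighborhoods corresponding to members of 𝒱
    obtain ⟨cm, hcm1, hcm2, hcm3⟩ : ∃ cm : Set X → Set (Set X),
        (∀ v, #(cm v) ≤ 1) ∧
        (∀ v s, s ∈ cm v → ∃ x ∈ 𝔄, s = W x) ∧
        (∀ v, (∃ x ∈ 𝔄, v = interior (W x)) →
          ∃ x ∈ 𝔄, v = interior (W x) ∧ W x ∈ cm v) := by
      refine ⟨fun v => if h : ∃ x ∈ 𝔄, v = interior (W x) then {W h.choose} else ∅,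
        ?_, ?_, ?_⟩
      · intro v
        by_cases h : ∃ x ∈ 𝔄, v = interior (W x)
        · simp only [dif_pos h, Cardinal.mk_singleton, le_refl]
        · simp only [dif_neg h, Cardinal.mk_emptyCollection]
          exact zero_le
      · intro v s hs
        by_cases h : ∃ x ∈ 𝔄, v = interior (W x)
        · simp only [dif_pos h, mem_singleton_iff] at hs
          exact ⟨h.choose, h.choose_spec.1, hs⟩
        · simp only [dif_neg h] at hs
          exact absurd hs (notMem_empty s)
      · intro v h
        refine ⟨h.choose, h.choose_spec.1, h.choose_spec.2, ?_⟩
        simp only [dif_pos h, mem_singleton_iff]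
    set 𝒲 : Set (Set X) := ⋃ v ∈ 𝒱, cm v with h𝒲
    have h𝒲card : #𝒲 ≤ κ := by
      refine (Cardinal.mk_biUnion_le _ _).trans ?_
      refine (mul_le_mul' h𝒱card (ciSup_le' (fun v : ↥𝒱 => hcm1 v.1))).trans ?_
      rw [mul_one]
    have h𝒲mem : ∀ s ∈ 𝒲, ∃ x ∈ 𝔄, s = W x := by
      intro s hs
      obtain ⟨v, hv, hsc⟩ := mem_iUnion₂.1 hs
      exact hcm2 v s hsc
    -- 𝔄 is covered by ⋃₀ 𝒲
    have hcov𝔄 : 𝔄 ⊆ ⋃₀ 𝒲 := by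
      intro a ha
      have : a ∈ ⋃ v ∈ 𝒱, closure v := h𝒱cov.symm ▸ mem_univ a
      obtain ⟨v, hv𝒱, hacl⟩ := mem_iUnion₂.1 this
      rcases h𝒱sub hv𝒱 with hvim | hvset
      · obtain ⟨x, hx, hxeq⟩ := hvim
        obtain ⟨x', hx', hveq', hWc⟩ := hcm3 v ⟨x, hx, hxeq.symm⟩
        have haW : a ∈ W x' := by
          have : a ∈ closure (interior (W x')) := hveq' ▸ hacl
          exact closure_minimal interior_subset (hVn x' (W x') (hW x' hx').1).1 this
        exact ⟨W x', mem_biUnion hv𝒱 hWc, haW⟩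
      · exfalso
        have : a ∈ closure v ∩ 𝔄 := ⟨hacl, ha⟩
        rw [hvset.2] at this
        exact this
    -- absorption property P3 : the witness of 𝒲 lies in 𝔄
    have hrank : ∀ s : 𝒲, ∃ x, x ∈ 𝔄 ∧ s.1 ∈ V x := by
      rintro ⟨s, hs⟩
      obtain ⟨x, hx, rfl⟩ := h𝒲mem s hs
      exact ⟨x, hx, (hW x hx).1⟩
    choose p hp1 hp2 using hrank
    have hordp : ∀ s : 𝒲, ∃ α : Set.Iio O, p s ∈ Ach α.1 := fun s =>
      mem_iUnion.1 (hp1 s)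
    choose rp hrp using hordp
    have hγ : (⨆ s : 𝒲, (rp s).1) < O := by
      refine Ordinal.iSup_lt_ord ?_ (fun s => (rp s).2)
      rw [hcof]
      exact h𝒲card.trans_lt (Order.lt_succ κ)
    have hsucc : Order.succ (⨆ s : 𝒲, (rp s).1) < O := hOlim.succ_lt hγ
    have h𝒲sub : 𝒲 ⊆ ⋃ x ∈ (⋃ β : Set.Iio (Order.succ (⨆ s : 𝒲, (rp s).1)), Ach β.1),
        V x := by
      intro s hs
      refine mem_biUnion (mem_iUnion.2 ⟨⟨(rp ⟨s, hs⟩).1, ?_⟩, hrp ⟨s, hs⟩⟩) (hp2 ⟨s, hs⟩)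
      exact (le_ciSup (Ordinal.bddAbove_range _) (⟨s, hs⟩ : 𝒲)).trans_lt (Order.lt_succ _)
    have hwitA : wit 𝒲 ∈ 𝔄 := by
      have h1 : wit 𝒲 ∈ step (⋃ β : Set.Iio (Order.succ (⨆ s : 𝒲, (rp s).1)), Ach β.1) :=
        hstep2 _ 𝒲 h𝒲sub h𝒲card
      rw [← hAch] at h1
      exact mem_iUnion.2 ⟨⟨_, hsucc⟩, h1⟩
    -- conclude
    by_cases htotW : ⋃₀ 𝒲 = Set.univ
    · have hq𝒲 : q ∈ ⋃₀ 𝒲 := htotW.symm ▸ mem_univ q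
      obtain ⟨s, hs𝒲, hqs⟩ := hq𝒲
      obtain ⟨x, hx, rfl⟩ := h𝒲mem s hs𝒲
      exact (hW x hx).2 hqs
    · exact hwit 𝒲 htotW (hcov𝔄 hwitA)
  calc #X = #(Set.univ : Set X) := (@Cardinal.mk_univ X).symm
    _ ≤ #𝔄 := Cardinal.mk_le_mk_of_subset (fun z _ => htot z)
    _ ≤ 2 ^ κ := h𝔄card
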